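/- Let G and H be non-bipartite graphs with χ(G) = χ(H) − j for some j ≥ 0, and suppose there is a homomorphism from G to H. Then for every integer i with i + j ≥ −χ(G) + 3, the (i+j)-th power thickness of G is at least the i-th power thickness of H. -/

import Mathlib

structure PGraph where
  V : Type
  Adj : V → V → Prop
  symm : ∀ u v, Adj u v → Adj v u

namespace PGraph

/-- There is a walk of length exactly `n` from `u` to `v`. -/
def walkLen (G : PGraph) : ℕ → G.V → G.V → Prop
  | 0, u, v => u = v
  | n+1, u, v => ∃ w, G.Adj u w ∧ G.walkLen n w v

theorem walkLen_concat (G : PGraph) : ∀ (n : ℕ) (u v w : G.V),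
    G.walkLen n u v → G.Adj v w → G.walkLen (n+1) u w := by
  intro n
  induction n with
  | zero =>
      intro u v w h hadj
      cases h
      exact ⟨w, hadj, rfl⟩
  | succ n ih =>
      rintro u v w ⟨x, hux, hxv⟩ hadj
      exact ⟨x, hux, ih x v w hxv hadj⟩

theorem walkLen_symm (G : PGraph) : ∀ (n : ℕ) (u v : G.V),
    G.walkLen n u v → G.walkLen n v u := by
  intro n
  induction n with
  | zero => intro u v h; exact h.symm
  | succ n ih =>
      rintro u v ⟨w, huw, hwv⟩
      exact G.walkLen_concat n v w u (ih w v hwv) (G.symm u w huw)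

/-- The `k`-th power of a graph: same vertices, adjacency = existence of a
walk of length exactly `k` (loops allowed). -/
def pow (G : PGraph) (k : ℕ) : PGraph where
  V := G.V
  Adj u v := G.walkLen k u v
  symm := G.walkLen_symm k

/-- Existence of a graph homomorphism. -/
def homTo (G H : PGraph) : Prop :=
  ∃ f : G.V → H.V, ∀ u v, G.Adj u v → H.Adj (f u) (f v)

/-- The `(2s+1)`-subdivision `S_{2s+1}(G)`: every edge is replaced by a path
of length `2s+1`.  Following the paper's notation, the ordered pair `(u,v)`
(with `u ~ v`) carries the `s` inner vertices `(uv)_1, …, (uv)_s`. -/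
def subdiv (G : PGraph) (s : ℕ) : PGraph where
  V := G.V ⊕ ({p : G.V × G.V // G.Adj p.1 p.2} × Fin s)
  Adj x y :=
    match x, y with
    | Sum.inl u, Sum.inl v => s = 0 ∧ G.Adj u v
    | Sum.inl u, Sum.inr (e, k) => u = e.1.2 ∧ (k : ℕ) = s - 1
    | Sum.inr (e, k), Sum.inl u => u = e.1.2 ∧ (k : ℕ) = s - 1
    | Sum.inr (e, k), Sum.inr (e', l) =>
        e'.1.1 = e.1.2 ∧ e'.1.2 = e.1.1 ∧
        ((k : ℕ) + (l : ℕ) + 2 = s ∨ (k : ℕ) + (l : ℕ) + 2 = s + 1)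
  symm := by
    rintro (u | ⟨e, k⟩) (v | ⟨e', l⟩) h
    · exact ⟨h.1, G.symm _ _ h.2⟩
    · exact h
    · exact h
    · obtain ⟨h1, h2, h3⟩ := h
      exact ⟨h2.symm, h1.symm, by omega⟩

/-- `q < og(G)`: the rational `q` is smaller than the odd girth of `G`
(the length of a shortest odd closed walk; vacuously true if `G` is bipartite). -/
def ltOddGirth (G : PGraph) (q : ℚ) : Prop :=
  ∀ n : ℕ, Odd n → (∃ v, G.walkLen n v v) → q < (n : ℚ)

/-- A graph is non-bipartite iff it contains an odd closed walk. -/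
def Nonbipartite (G : PGraph) : Prop :=
  ∃ (n : ℕ) (v : G.V), Odd n ∧ G.walkLen n v v

/-- The odd girth, as an extended natural number (`⊤` for bipartite graphs). -/
noncomputable def oddGirth (G : PGraph) : ℕ∞ :=
  sInf {N : ℕ∞ | ∃ n : ℕ, N = (n : ℕ∞) ∧ Odd n ∧ ∃ v, G.walkLen n v v}

/-- The complete graph on `m` vertices. -/
def completeGraph (m : ℕ) : PGraph :=
  ⟨Fin m, fun u v => u ≠ v, fun _ _ h => h.symm⟩

/-- The chromatic number: least `m` such that `G` maps homomorphically to `K_m`. -/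
noncomputable def chromatic (G : PGraph) : ℕ :=
  sInf {m : ℕ | G.homTo (completeGraph m)}

/-- The `i`-th power thickness
`θ_i(G) = sup { (2r+1)/(2s+1) | χ(G^{(2r+1)/(2s+1)}) ≤ χ(G)+i, (2r+1)/(2s+1) < og(G) }`. -/
noncomputable def powerThickness (G : PGraph) (i : ℤ) : ℝ :=
  sSup {x : ℝ | ∃ r s : ℕ, x = (2*(r:ℝ)+1)/(2*(s:ℝ)+1) ∧
    ((((G.subdiv s).pow (2*r+1)).chromatic : ℤ) ≤ (G.chromatic : ℤ) + i) ∧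
    G.ltOddGirth ((2*(r:ℚ)+1)/(2*(s:ℚ)+1))}

/-- The graph `H^{-1/(2r+1)}`. -/
def negPow (H : PGraph) (r : ℕ) : PGraph where
  V := {A : Fin (r+1) → Set H.V //
        (∃ v, A 0 = {v}) ∧
        ∀ i : Fin (r+1), (A i).Nonempty ∧ A i ⊆ {u | ∃ v ∈ A 0, H.walkLen i v u}}
  Adj A B :=
    (∀ i j : Fin (r+1), (j : ℕ) = (i : ℕ) + 1 → A.1 i ⊆ B.1 j ∧ B.1 i ⊆ A.1 j) ∧
    ∀ j : Fin (r+1), ∀ a ∈ A.1 j, ∀ b ∈ B.1 j, H.Adj a b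
  symm := by
    rintro A B ⟨h1, h2⟩
    exact ⟨fun i j hij => ⟨(h1 i j hij).2, (h1 i j hij).1⟩,
           fun j b hb a ha => H.symm _ _ (h2 j a ha b hb)⟩

/-- The circular complete graph `K_{n/d}`. -/
def circGraph (n d : ℕ) : PGraph where
  V := Fin n
  Adj u v := (d : ℤ) ≤ |(u : ℤ) - (v : ℤ)| ∧ |(u : ℤ) - (v : ℤ)| ≤ (n : ℤ) - d
  symm := by
    intro u v h
    rwa [abs_sub_comm]

/-- The circular chromatic number, as a real number. -/
noncomputable def circChrom (G : PGraph) : ℝ :=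
  sInf {x : ℝ | ∃ n d : ℕ, 0 < d ∧ 2 * d ≤ n ∧ Nat.gcd n d = 1 ∧
    x = (n : ℝ) / (d : ℝ) ∧ G.homTo (circGraph n d)}

/-- The cycle on `m` vertices. -/
def cycleGraph (m : ℕ) : PGraph :=
  ⟨ZMod m, fun i j => i = j + 1 ∨ j = i + 1, fun _ _ h => h.symm⟩

/-- PGraph isomorphism. -/
def Isom (G H : PGraph) : Prop :=
  ∃ f : G.V ≃ H.V, ∀ u v, G.Adj u v ↔ H.Adj (f u) (f v)

/-- The helical graph `H(m,n,k)`. -/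
def helical (m n k : ℕ) : PGraph where
  V := {A : Fin k → Set (Fin m) //
        (∀ h : 0 < k, (A ⟨0, h⟩).ncard = n) ∧
        (∀ i, n ≤ (A i).ncard) ∧
        (∀ i : Fin k, ∀ h : (i : ℕ) + 1 < k, A i ∩ A ⟨(i : ℕ) + 1, h⟩ = ∅) ∧
        (∀ i : Fin k, ∀ h : (i : ℕ) + 2 < k, A i ⊆ A ⟨(i : ℕ) + 2, h⟩)}
  Adj A B :=
    (∀ i, A.1 i ∩ B.1 i = ∅) ∧
    (∀ i : Fin k, ∀ h : (i : ℕ) + 1 < k,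
      A.1 i ⊆ B.1 ⟨(i : ℕ) + 1, h⟩ ∧ B.1 i ⊆ A.1 ⟨(i : ℕ) + 1, h⟩)
  symm := by
    rintro A B ⟨h1, h2⟩
    refine ⟨fun i => ?_, fun i h => ⟨(h2 i h).2, (h2 i h).1⟩⟩
    rw [Set.inter_comm]
    exact h1 i

/-- A graph with chromatic number `k` is colorful if every proper `k`-coloring
admits a (nonempty) induced subgraph all of whose vertices see all `k` colors in
their closed neighborhood. -/
def Colorful (G : PGraph) : Prop :=
  ∀ c : G.V → Fin G.chromatic, (∀ u v, G.Adj u v → c u ≠ c v) →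
    ∃ S : Set G.V, S.Nonempty ∧
      ∀ v ∈ S, ∀ col : Fin G.chromatic,
        ∃ u ∈ S, (u = v ∨ G.Adj v u) ∧ c u = col

end PGraph

namespace PGraph

theorem walkLen_cons' (G : PGraph) {n : ℕ} {u v w : G.V} (h : G.Adj u w)
    (hw : G.walkLen n w v) : G.walkLen (n+1) u v := ⟨w, h, hw⟩

theorem walkLen_append' (G : PGraph) : ∀ (m : ℕ) {n : ℕ} {u v w : G.V},
    G.walkLen m u v → G.walkLen n v w → G.walkLen (m + n) u w := by
  intro m
  induction m with
  | zero =>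
      intro n u v w h1 h2
      have h1' : u = v := h1
      subst h1'
      simpa using h2
  | succ m ih =>
      intro n u v w h1 h2
      have h1' : ∃ x, G.Adj u x ∧ G.walkLen m x v := h1
      obtain ⟨x, hx, hrest⟩ := h1'
      have hEq : m + 1 + n = (m + n) + 1 := by omega
      rw [hEq]
      exact walkLen_cons' G hx (ih hrest h2)

theorem walkLen_map' (G H : PGraph) (f : G.V → H.V)
    (hf : ∀ u v, G.Adj u v → H.Adj (f u) (f v)) :
    ∀ n u v, G.walkLen n u v → H.walkLen n (f u) (f v) := by
  intro n
  induction n with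
  | zero => intro u v h; exact congrArg f h
  | succ n ih =>
      intro u v h
      obtain ⟨w, hw, hrest⟩ := (h : ∃ w, G.Adj u w ∧ G.walkLen n w v)
      exact ⟨f w, hf _ _ hw, ih _ _ hrest⟩

theorem walkLen_of_loop' (G : PGraph) (x : G.V) (h : G.Adj x x) :
    ∀ n, G.walkLen n x x
  | 0 => rfl
  | n+1 => ⟨x, h, walkLen_of_loop' G x h n⟩

theorem chromatic_eq_zero_of_loop' (G : PGraph) (x : G.V) (h : G.Adj x x) :
    G.chromatic = 0 := by
  have hS : {m : ℕ | G.homTo (completeGraph m)} = ∅ := by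
    ext m
    simp only [Set.mem_setOf_eq, Set.mem_empty_iff_false, iff_false]
    rintro ⟨f, hf⟩
    exact hf x x h rfl
  have hdef : G.chromatic = sInf {m : ℕ | G.homTo (completeGraph m)} := rfl
  rw [hdef, hS, Nat.sInf_empty]

theorem exists_loop_of_chromatic_zero' (G : PGraph) (hfin : Finite G.V)
    (hne : Nonempty G.V) (h0 : G.chromatic = 0) : ∃ x, G.Adj x x := by
  by_contra hcon
  push_neg at hcon
  obtain ⟨n, ⟨e⟩⟩ := Finite.exists_equiv_fin G.V
  have hmem : n ∈ {m : ℕ | G.homTo (completeGraph m)} := by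
    refine ⟨fun v => e v, fun u v huv => ?_⟩
    intro hEq
    have h := e.injective hEq
    subst h
    exact hcon u huv
  have hSne : {m : ℕ | G.homTo (completeGraph m)}.Nonempty := ⟨n, hmem⟩
  have hm := Nat.sInf_mem hSne
  have hdef : G.chromatic = sInf {m : ℕ | G.homTo (completeGraph m)} := rfl
  rw [← hdef, h0] at hm
  obtain ⟨f, -⟩ := hm
  exact (f hne.some).elim0

theorem subdiv_homTo' (G H : PGraph) (s : ℕ) (f : G.V → H.V)
    (hf : ∀ u v, G.Adj u v → H.Adj (f u) (f v)) :
    ∃ F : (G.subdiv s).V → (H.subdiv s).V,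
      ∀ u v, (G.subdiv s).Adj u v → (H.subdiv s).Adj (F u) (F v) := by
  refine ⟨Sum.map f (fun ek => (⟨(f ek.1.1.1, f ek.1.1.2), hf _ _ ek.1.2⟩, ek.2)), ?_⟩
  rintro (u | ⟨e, k⟩) (v | ⟨e', l⟩) h
  · exact ⟨h.1, hf _ _ h.2⟩
  · exact ⟨congrArg f h.1, h.2⟩
  · exact ⟨congrArg f h.1, h.2⟩
  · exact ⟨congrArg f h.1, congrArg f h.2.1, h.2.2⟩

theorem subdiv_proj' (H : PGraph) (s : ℕ) :
    ∀ (L : ℕ) (x : (H.subdiv s).V) (v : H.V), (H.subdiv s).walkLen L x (Sum.inl v) →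
      (∀ u, x = Sum.inl u →
        ∃ ℓ, H.walkLen ℓ u v ∧ (2*s+1)*ℓ ≤ L ∧ ℓ % 2 = L % 2) ∧
      (∀ (e : {p : H.V × H.V // H.Adj p.1 p.2}) (k : Fin s), x = Sum.inr (e, k) →
        (∃ ℓ, H.walkLen ℓ e.1.1 v ∧ (2*s+1)*ℓ ≤ L + 2*(k:ℕ) + 2 ∧ ℓ % 2 = L % 2) ∧
        (∃ ℓ, H.walkLen ℓ e.1.2 v ∧ (2*s+1)*ℓ ≤ L + (2*s - 2*(k:ℕ) - 1) ∧
          ℓ % 2 = (L+1) % 2)) := by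
  intro L
  induction L with
  | zero =>
      intro x v hw
      constructor
      · intro u hx
        subst hx
        have h : (Sum.inl u : (H.subdiv s).V) = Sum.inl v := hw
        obtain rfl := Sum.inl.inj h
        exact ⟨0, rfl, by omega, rfl⟩
      · intro e k hx
        subst hx
        have h : (Sum.inr (e, k) : (H.subdiv s).V) = Sum.inl v := hw
        exact absurd h Sum.inr_ne_inl
  | succ L ih =>
      intro x v hw
      have hw' : ∃ y, (H.subdiv s).Adj x y ∧ (H.subdiv s).walkLen L y (Sum.inl v) := hw
      obtain ⟨y, hxy, hyw⟩ := hw'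
      have IH := ih y v hyw
      constructor
      · intro u hx
        subst hx
        cases y with
        | inl u' =>
            have h : s = 0 ∧ H.Adj u u' := hxy
            obtain ⟨ℓ, hwalk, hb, hp⟩ := IH.1 u' rfl
            have hmul : (2*s+1)*(ℓ+1) = (2*s+1)*ℓ + (2*s+1) := by ring
            have hs0 := h.1
            exact ⟨ℓ+1, walkLen_cons' H h.2 hwalk, by omega, by omega⟩
        | inr ek =>
            obtain ⟨e, k⟩ := ek
            have h : u = e.1.2 ∧ (k:ℕ) = s - 1 := hxy
            obtain ⟨-, ⟨ℓ, hwalk, hb, hp⟩⟩ := IH.2 e k rfl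
            have hks := k.isLt
            have hk := h.2
            refine ⟨ℓ, by rw [h.1]; exact hwalk, by omega, by omega⟩
      · intro e k hx
        subst hx
        have hks := k.isLt
        cases y with
        | inl u' =>
            have h : u' = e.1.2 ∧ (k:ℕ) = s - 1 := hxy
            obtain ⟨ℓ, hwalk, hb, hp⟩ := IH.1 u' rfl
            have hk := h.2
            have hwalk2 : H.walkLen ℓ e.1.2 v := by rw [← h.1]; exact hwalk
            have hmul : (2*s+1)*(ℓ+1) = (2*s+1)*ℓ + (2*s+1) := by ring
            constructor
            · exact ⟨ℓ+1, walkLen_cons' H e.2 hwalk2, by omega, by omega⟩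
            · exact ⟨ℓ, hwalk2, by omega, by omega⟩
        | inr ek' =>
            obtain ⟨e', l⟩ := ek'
            have h : e'.1.1 = e.1.2 ∧ e'.1.2 = e.1.1 ∧
                ((k:ℕ) + (l:ℕ) + 2 = s ∨ (k:ℕ) + (l:ℕ) + 2 = s + 1) := hxy
            have hls := l.isLt
            have h3 := h.2.2
            obtain ⟨hA, hB⟩ := IH.2 e' l rfl
            constructor
            · obtain ⟨ℓ, hwalk, hb, hp⟩ := hB
              exact ⟨ℓ, by rw [← h.2.1]; exact hwalk, by omega, by omega⟩
            · obtain ⟨ℓ, hwalk, hb, hp⟩ := hA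
              exact ⟨ℓ, by rw [← h.1]; exact hwalk, by omega, by omega⟩

theorem subdiv_rotate' (H : PGraph) (s : ℕ) :
    ∀ (L : ℕ) (x y : (H.subdiv s).V), (H.subdiv s).walkLen L x y →
      ∀ (e : {p : H.V × H.V // H.Adj p.1 p.2}) (k : Fin s), x = Sum.inr (e, k) →
        (∃ t₁ t₂ w, t₁ + t₂ = L ∧ (H.subdiv s).walkLen t₁ x (Sum.inl w) ∧
            (H.subdiv s).walkLen t₂ (Sum.inl w) y) ∨
        (∃ (e' : {p : H.V × H.V // H.Adj p.1 p.2}) (l : Fin s), y = Sum.inr (e', l) ∧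
          ((e'.1.1 = e.1.1 ∧ e'.1.2 = e.1.2 ∧ L % 2 = 0) ∨
           (e'.1.1 = e.1.2 ∧ e'.1.2 = e.1.1 ∧ L % 2 = 1))) := by
  intro L
  induction L with
  | zero =>
      intro x y hw e k hx
      subst hx
      have h : (Sum.inr (e,k) : (H.subdiv s).V) = y := hw
      exact Or.inr ⟨e, k, h.symm, Or.inl ⟨rfl, rfl, rfl⟩⟩
  | succ L ih =>
      intro x y hw e k hx
      subst hx
      have hw' : ∃ z, (H.subdiv s).Adj (Sum.inr (e,k)) z ∧ (H.subdiv s).walkLen L z y := hw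
      obtain ⟨z, hxz, hzy⟩ := hw'
      cases z with
      | inl u =>
          exact Or.inl ⟨1, L, u, by omega, walkLen_cons' _ hxz rfl, hzy⟩
      | inr el =>
          obtain ⟨e2, m⟩ := el
          have hadj : e2.1.1 = e.1.2 ∧ e2.1.2 = e.1.1 ∧
              ((k:ℕ) + (m:ℕ) + 2 = s ∨ (k:ℕ) + (m:ℕ) + 2 = s + 1) := hxz
          rcases ih _ y hzy e2 m rfl with ⟨t₁, t₂, w, ht, h1, h2⟩ | ⟨e', l, hy, hcase⟩
          · exact Or.inl ⟨t₁+1, t₂, w, by omega, walkLen_cons' _ hxz h1, h2⟩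
          · refine Or.inr ⟨e', l, hy, ?_⟩
            rcases hcase with ⟨p1, p2, hp⟩ | ⟨p1, p2, hp⟩
            · exact Or.inr ⟨p1.trans hadj.1, p2.trans hadj.2.1, by omega⟩
            · exact Or.inl ⟨p1.trans hadj.2.1, p2.trans hadj.1, by omega⟩

theorem loop_of_odd_closed' (H : PGraph) (s r : ℕ)
    (hog : H.ltOddGirth ((2*(r:ℚ)+1)/(2*(s:ℚ)+1)))
    (x : (H.subdiv s).V) (hx : (H.subdiv s).walkLen (2*r+1) x x) :
    ∃ a, H.Adj a a := by
  have branch : ∀ w : H.V,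
      (H.subdiv s).walkLen (2*r+1) (Sum.inl w) (Sum.inl w) → False := by
    intro w hw
    obtain ⟨ℓ, hwalk, hb, hp⟩ := (subdiv_proj' H s (2*r+1) _ w hw).1 w rfl
    have hodd : Odd ℓ := Nat.odd_iff.mpr (by omega)
    have hlt := hog ℓ hodd ⟨w, hwalk⟩
    rw [div_lt_iff₀ (by positivity)] at hlt
    have h2 : ((2*r+1 : ℕ) : ℚ) < (((2*s+1) * ℓ : ℕ) : ℚ) := by push_cast; linarith
    have h3 : 2*r+1 < (2*s+1) * ℓ := by exact_mod_cast h2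
    omega
  cases x with
  | inl w => exact (branch w hx).elim
  | inr ek =>
      obtain ⟨e, k⟩ := ek
      rcases subdiv_rotate' H s (2*r+1) _ _ hx e k rfl with
        ⟨t₁, t₂, w, ht, h1, h2⟩ | ⟨e', l, hy, hcase⟩
      · have hcat := walkLen_append' (H.subdiv s) t₂ h2 h1
        have hEq : t₂ + t₁ = 2*r+1 := by omega
        rw [hEq] at hcat
        exact (branch w hcat).elim
      · have hpair : ((e, k) : {p : H.V × H.V // H.Adj p.1 p.2} × Fin s) = (e', l) :=
          Sum.inr.inj hy
        have he : e = e' := congrArg Prod.fst hpair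
        subst he
        rcases hcase with ⟨-, -, hp⟩ | ⟨p1, -, -⟩
        · omega
        · refine ⟨e.1.2, ?_⟩
          have h12 := e.2
          rw [p1] at h12
          exact h12

theorem sSup_le_sSup_of_subset' (S T : Set ℝ) (hsub : S ⊆ T) (hbdd : BddAbove T)
    (hpos : ∀ x ∈ T, 0 ≤ x) : sSup S ≤ sSup T := by
  rcases Set.eq_empty_or_nonempty S with hE | hne
  · rw [hE, Real.sSup_empty]
    exact Real.sSup_nonneg hpos
  · exact csSup_le_csSup hbdd hne hsub

end PGraph

open PGraph
/-- If `χ(G) = χ(H) - j` (`j ≥ 0`), `G → H`, and `i + j ≥ -χ(G)+3`,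
then `θ_{i+j}(G) ≥ θ_i(H)`. -/
theorem powerThickness_mono (G H : PGraph) (hG : G.Nonbipartite) (hH : H.Nonbipartite)
    (hGf : Finite G.V) (hHf : Finite H.V) (j : ℕ)
    (hchi : (G.chromatic : ℤ) = (H.chromatic : ℤ) - (j : ℤ))
    (hhom : G.homTo H) (i : ℤ) (hi : i + (j : ℤ) ≥ -(G.chromatic : ℤ) + 3) :
    G.powerThickness (i + j) ≥ H.powerThickness i := by
  obtain ⟨f, hf⟩ := hhom
  obtain ⟨n0, v0, hodd0, hw0⟩ := hG
  obtain ⟨nH1, vH, -, -⟩ := hH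
  haveI : Finite G.V := hGf
  haveI : Finite H.V := hHf
  have key : ∀ r s : ℕ,
      ((((H.subdiv s).pow (2*r+1)).chromatic : ℤ) ≤ (H.chromatic : ℤ) + i) →
      H.ltOddGirth ((2*(r:ℚ)+1)/(2*(s:ℚ)+1)) →
      ((((G.subdiv s).pow (2*r+1)).chromatic : ℤ) ≤ (G.chromatic : ℤ) + (i + j)) := by
    intro r s hc hog
    obtain ⟨F, hF⟩ := subdiv_homTo' G H s f hf
    have hpow : ∀ u v, ((G.subdiv s).pow (2*r+1)).Adj u v →
        ((H.subdiv s).pow (2*r+1)).Adj (F u) (F v) :=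
      fun u v h => walkLen_map' (G.subdiv s) (H.subdiv s) F hF (2*r+1) u v h
    by_cases hSB :
        {m : ℕ | ((H.subdiv s).pow (2*r+1)).homTo (completeGraph m)}.Nonempty
    · obtain ⟨g, hg⟩ := Nat.sInf_mem hSB
      have hmemG : ((G.subdiv s).pow (2*r+1)).chromatic ≤
          sInf {m : ℕ | ((H.subdiv s).pow (2*r+1)).homTo (completeGraph m)} :=
        Nat.sInf_le ⟨fun v => g (F v), fun u v h => hg _ _ (hpow u v h)⟩
      have hHdef : ((H.subdiv s).pow (2*r+1)).chromatic =
          sInf {m : ℕ | ((H.subdiv s).pow (2*r+1)).homTo (completeGraph m)} := rfl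
      rw [← hHdef] at hmemG
      omega
    · rw [Set.not_nonempty_iff_eq_empty] at hSB
      have h0H : ((H.subdiv s).pow (2*r+1)).chromatic = 0 := by
        have hdef : ((H.subdiv s).pow (2*r+1)).chromatic =
            sInf {m : ℕ | ((H.subdiv s).pow (2*r+1)).homTo (completeGraph m)} := rfl
        rw [hdef, hSB, Nat.sInf_empty]
      haveI hfinH : Finite ((H.subdiv s).pow (2*r+1)).V :=
        inferInstanceAs (Finite (H.V ⊕ ({p : H.V × H.V // H.Adj p.1 p.2} × Fin s)))
      have hneH : Nonempty ((H.subdiv s).pow (2*r+1)).V := ⟨Sum.inl vH⟩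
      obtain ⟨xh, hxh⟩ := exists_loop_of_chromatic_zero' _ hfinH hneH h0H
      have hxw : (H.subdiv s).walkLen (2*r+1) xh xh := hxh
      obtain ⟨a, haa⟩ := loop_of_odd_closed' H s r hog xh hxw
      have hq1 : ((2*(r:ℚ)+1)/(2*(s:ℚ)+1)) < 1 := by
        have h1 := hog 1 odd_one ⟨a, walkLen_cons' H haa rfl⟩
        simpa using h1
      have hrs : r < s := by
        rw [div_lt_iff₀ (by positivity)] at hq1
        have h2 : (r:ℚ) < (s:ℚ) := by linarith
        exact_mod_cast h2
      have hH0 : H.chromatic = 0 := chromatic_eq_zero_of_loop' H a haa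
      have hG0 : G.chromatic = 0 := by omega
      obtain ⟨g0, hg0⟩ := exists_loop_of_chromatic_zero' G hGf ⟨v0⟩ hG0
      have hk : (s-1)/2 < s := by omega
      have hzz : (G.subdiv s).Adj (Sum.inr (⟨(g0, g0), hg0⟩, ⟨(s-1)/2, hk⟩))
          (Sum.inr (⟨(g0, g0), hg0⟩, ⟨(s-1)/2, hk⟩)) := ⟨rfl, rfl, by simp; omega⟩
      have hgw : (G.subdiv s).walkLen (2*r+1)
          (Sum.inr (⟨(g0, g0), hg0⟩, ⟨(s-1)/2, hk⟩))
          (Sum.inr (⟨(g0, g0), hg0⟩, ⟨(s-1)/2, hk⟩)) :=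
        walkLen_of_loop' _ _ hzz (2*r+1)
      have h0G : ((G.subdiv s).pow (2*r+1)).chromatic = 0 :=
        chromatic_eq_zero_of_loop' ((G.subdiv s).pow (2*r+1)) _ hgw
      rw [h0G, h0H] at *
      omega
  have hogG : ∀ q : ℚ, H.ltOddGirth q → G.ltOddGirth q := by
    intro q hq n hn hex
    obtain ⟨v, hv⟩ := hex
    exact hq n hn ⟨f v, walkLen_map' G H f hf n v v hv⟩
  rw [ge_iff_le]
  apply sSup_le_sSup_of_subset'
  · rintro x ⟨r, s, rfl, hc, hog⟩
    exact ⟨r, s, rfl, key r s hc hog, hogG _ hog⟩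
  · refine ⟨(n0:ℝ), ?_⟩
    rintro x ⟨r, s, rfl, -, hog⟩
    have h1 := hog n0 hodd0 ⟨v0, hw0⟩
    have h3 : (((2*(r:ℚ)+1)/(2*(s:ℚ)+1) : ℚ) : ℝ) < ((n0:ℚ):ℝ) := by exact_mod_cast h1
    push_cast at h3
    linarith
  · rintro x ⟨r, s, rfl, -, -⟩
    positivity
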